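/- If P is a well partial order of infinite cardinality κ, then the height h(P) is at least κ. -/

import Mathlib

universe u

open Ordinal

/-- The rank of a well-founded relation: the least ordinal `γ` admitting a
strictly `r`-decreasing... i.e. `r a b → f a < f b`; equals `sup (rank a + 1)`. -/
noncomputable def relRank {β : Type u} (r : β → β → Prop) : Ordinal.{u} :=
  haveI := Classical.propDecidable (WellFounded r)
  if h : WellFounded r then ⨆ a : β, Order.succ ((h.apply a).rank) else 0

/-- `extRel T s t` : `s` strictly extends `t` (both in tree `T`). -/
def extRel {α : Type u} (T : Set (List α)) (s t : T) : Prop :=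
  t.1 <+: s.1 ∧ t.1 ≠ s.1

/-- Rank of a tree of finite sequences ordered by the initial segment relation. -/
noncomputable def treeRank {α : Type u} (T : Set (List α)) : Ordinal.{u} :=
  relRank (extRel T)

/-- Non-empty finite sequences of pairwise incomparable elements. -/
def IncSeqs (P : Type u) [Preorder P] : Set (List P) :=
  {l | l ≠ [] ∧ l.Pairwise fun x y => ¬ x ≤ y ∧ ¬ y ≤ x}

/-- Non-empty strictly descending finite sequences. -/
def DecSeqs (P : Type u) [Preorder P] : Set (List P) :=
  {l | l ≠ [] ∧ l.Pairwise fun x y => y < x}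

/-- Non-empty bad sequences. -/
def BadSeqs (P : Type u) [Preorder P] : Set (List P) :=
  {l | l ≠ [] ∧ l.Pairwise fun x y => ¬ x ≤ y}

/-- Width of a FAC (quasi-)order: the rank of its tree of antichain sequences. -/
noncomputable def width (P : Type u) [Preorder P] : Ordinal.{u} := treeRank (IncSeqs P)

/-- Height: the rank of the tree of strictly descending sequences. -/
noncomputable def height (P : Type u) [Preorder P] : Ordinal.{u} := treeRank (DecSeqs P)

/-- Maximal order type: the rank of the tree of bad sequences. -/
noncomputable def mot (P : Type u) [Preorder P] : Ordinal.{u} := treeRank (BadSeqs P)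

/-- Finite antichain condition. -/
def FAC (P : Type u) [Preorder P] : Prop :=
  ∀ A : Set P, IsAntichain (· ≤ ·) A → A.Finite

/-- Well quasi-order: every infinite sequence is good. -/
def IsWQO (P : Type u) [Preorder P] : Prop :=
  ∀ f : ℕ → P, ∃ i j : ℕ, i < j ∧ f i ≤ f j

/-- Well partial order. -/
def IsWPO (P : Type u) [Preorder P] : Prop :=
  WellFounded ((· < ·) : P → P → Prop) ∧ FAC P


section Aux

variable {P : Type u} [PartialOrder P]

/-- The last (hence smallest) element of a nonempty descending sequence. -/
noncomputable def lastOf (l : DecSeqs P) : P := l.1.getLast l.2.1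

lemma getLast_le_of_mem {l : List P} (hp : l.Pairwise fun x y => y < x) (hne : l ≠ [])
    {x : P} (hx : x ∈ l) : l.getLast hne ≤ x := by
  induction l with
  | nil => simp at hx
  | cons a t ih =>
    rcases eq_or_ne t [] with rfl | ht
    · simp at hx; simp [hx, List.getLast]
    · rw [List.getLast_cons ht]
      rcases List.mem_cons.1 hx with rfl | hxt
      · exact le_of_lt ((List.pairwise_cons.1 hp).1 _ (List.getLast_mem ht))
      · exact ih (List.pairwise_cons.1 hp).2 ht hxt

lemma ext_lastOf_lt {s t : DecSeqs P} (h : extRel (DecSeqs P) s t) : lastOf s < lastOf t := by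
  obtain ⟨r, hr⟩ := h.1
  have hrne : r ≠ [] := by
    rintro rfl; exact h.2 (by simpa using hr)
  have hps : s.1.Pairwise fun x y => y < x := s.2.2
  rw [← hr] at hps
  obtain ⟨_, _, hrel⟩ := List.pairwise_append.1 hps
  have h1 : lastOf s = r.getLast hrne := by
    simp only [lastOf]
    conv_lhs => rw [show s.1.getLast s.2.1 = (t.1 ++ r).getLast
      (by rw [hr]; exact s.2.1) from by congr 1; exact hr.symm]
    exact List.getLast_append_of_ne_nil _ hrne
  rw [h1]
  exact hrel _ (List.getLast_mem t.2.1) _ (List.getLast_mem hrne)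

lemma wf_extRel (hw : WellFounded ((· < ·) : P → P → Prop)) :
    WellFounded (extRel (DecSeqs P)) :=
  Subrelation.wf (fun h => ext_lastOf_lt h) (InvImage.wf lastOf hw)

lemma snoc_mem_decSeqs (t : DecSeqs P) {y : P} (hy : y < lastOf t) :
    t.1 ++ [y] ∈ DecSeqs P := by
  refine ⟨by simp, List.pairwise_append.2 ⟨t.2.2, List.pairwise_singleton _ _, ?_⟩⟩
  intro x hx z hz
  rw [List.mem_singleton] at hz
  subst hz
  exact lt_of_lt_of_le hy (getLast_le_of_mem t.2.2 t.2.1 hx)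

lemma extRel_snoc (t : DecSeqs P) {y : P} (hy : y < lastOf t) :
    extRel (DecSeqs P) ⟨t.1 ++ [y], snoc_mem_decSeqs t hy⟩ t := by
  constructor
  · exact ⟨[y], rfl⟩
  · intro h
    have := congrArg List.length h
    simp at this

lemma rank_le_treeRank (hw : WellFounded ((· < ·) : P → P → Prop)) (t : DecSeqs P) :
    (hw.apply (lastOf t)).rank ≤ ((wf_extRel hw).apply t).rank := by
  have main : ∀ x : P, ∀ t : DecSeqs P, lastOf t = x →
      (hw.apply x).rank ≤ ((wf_extRel hw).apply t).rank := by
    intro x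
    induction x using hw.induction with
    | _ x ih =>
      intro t ht
      rw [Acc.rank_eq]
      apply Ordinal.iSup_le
      rintro ⟨y, hy⟩
      rw [Order.succ_le_iff]
      have hy' : y < lastOf t := ht ▸ hy
      set t' : DecSeqs P := ⟨t.1 ++ [y], snoc_mem_decSeqs t hy'⟩ with ht'
      have hlast : lastOf t' = y := List.getLast_append_singleton _
      calc Acc.rank _ ≤ ((wf_extRel hw).apply t').rank := ih y hy t' hlast
        _ < ((wf_extRel hw).apply t).rank :=
          Acc.rank_lt_of_rel ((wf_extRel hw).apply t) (extRel_snoc t hy')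
  exact main _ t rfl

lemma rank_lt_height (hw : WellFounded ((· < ·) : P → P → Prop)) (x : P) :
    (hw.apply x).rank < height P := by
  have hwf := wf_extRel hw
  have hh : height P = ⨆ t : DecSeqs P, Order.succ ((hwf.apply t).rank) := by
    unfold height treeRank relRank
    rw [dif_pos hwf]
  set t₀ : DecSeqs P := ⟨[x], by exact ⟨List.cons_ne_nil _ _, List.pairwise_singleton _ _⟩⟩
  have h0 : lastOf t₀ = x := rfl
  have h1 : (hw.apply x).rank ≤ ((hwf.apply t₀)).rank := by
    have := rank_le_treeRank hw t₀
    rwa [h0] at this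
  have h2 : Order.succ ((hwf.apply t₀).rank) ≤ height P := by
    rw [hh]; exact Ordinal.le_iSup _ t₀
  exact (h1.trans_lt (Order.lt_succ _)).trans_le h2

end Aux

/-- **Dushnik–Miller.** A WPO of infinite cardinality `κ` has height `≥ κ`. -/
theorem stmt_3 {P : Type u} [PartialOrder P] (hwpo : IsWPO P)
    (κ : Cardinal.{u}) (hκ : Cardinal.aleph0 ≤ κ) (hcard : Cardinal.mk P = κ) :
    κ.ord ≤ height P := by
  classical
  obtain ⟨hw, hfac⟩ := hwpo
  set o := height P with ho
  rw [Cardinal.ord_le]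
  by_contra hlt
  push_neg at hlt
  have hrank : ∀ x : P, (hw.apply x).rank < o := rank_lt_height hw
  let f : P → o.ToType := fun x => Ordinal.ToType.mk (o := o) ⟨(hw.apply x).rank, hrank x⟩
  have hfib : ∀ b : o.ToType, (f ⁻¹' {b}).Finite := by
    intro b
    apply hfac
    intro x hx y hy hxy hle
    have hx' : f x = b := hx
    have hy' : f y = b := hy
    have : (hw.apply x).rank = (hw.apply y).rank := by
      have := hx'.trans hy'.symm
      simpa [f, Subtype.ext_iff] using (Ordinal.ToType.mk (o := o)).injective this
    have hlt' : (hw.apply x).rank < (hw.apply y).rank :=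
      Acc.rank_lt_of_rel _ (lt_of_le_of_ne hle hxy)
    exact absurd this hlt'.ne
  have hsum : Cardinal.mk P ≤ Cardinal.mk o.ToType * Cardinal.aleph0 := by
    calc Cardinal.mk P = Cardinal.mk (Σ b : o.ToType, f ⁻¹' {b}) :=
          Cardinal.mk_congr (Equiv.sigmaFiberEquiv f).symm
      _ = Cardinal.sum (fun b : o.ToType => Cardinal.mk (f ⁻¹' {b})) := Cardinal.mk_sigma _
      _ ≤ Cardinal.sum (fun _ : o.ToType => Cardinal.aleph0) := by
          apply Cardinal.sum_le_sum
          intro b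
          haveI := (hfib b).countable.to_subtype
          exact Cardinal.mk_le_aleph0
      _ = Cardinal.mk o.ToType * Cardinal.aleph0 := Cardinal.sum_const' _ _
  rw [Cardinal.mk_toType] at hsum
  rcases le_or_gt Cardinal.aleph0 o.card with hc | hc
  · rw [Cardinal.mul_aleph0_eq hc] at hsum
    exact absurd (hcard ▸ hsum) (not_le.2 hlt)
  · have hfin : Finite o.ToType := by
      rw [← Cardinal.lt_aleph0_iff_finite, Cardinal.mk_toType]; exact hc
    have : Finite P := by
      haveI : ∀ b : o.ToType, Finite {x : P // f x = b} := fun b =>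
        Set.Finite.to_subtype (s := {x | f x = b}) (hfib b)
      exact Finite.of_equiv _ (Equiv.sigmaFiberEquiv f)
    have : Cardinal.mk P < Cardinal.aleph0 := Cardinal.lt_aleph0_iff_finite.2 this
    rw [hcard] at this
    exact absurd hκ (not_le.2 this)
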